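/- Let B = [X, Y, Z] be a brick in the Heisenberg group H_n over F_p with |Z| > p/2. Then B·B = [X+X, Y+Y, F_p], and in particular B·B is a union of at least |B|/p cosets of the center [0, 0, F_p] of H_n. -/

import Mathlib

open scoped Pointwise

def Heis (p n : ℕ) : Type := (Fin n → ZMod p) × (Fin n → ZMod p) × ZMod p

namespace Heis

variable {p n : ℕ}

instance : Mul (Heis p n) :=
  ⟨fun a b => (a.1 + b.1, a.2.1 + b.2.1, (∑ i, a.1 i * b.2.1 i) + a.2.2 + b.2.2)⟩
instance : One (Heis p n) := ⟨((0 : Fin n → ZMod p), (0 : Fin n → ZMod p), (0 : ZMod p))⟩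
instance : Inv (Heis p n) :=
  ⟨fun a => (-a.1, -a.2.1, (∑ i, a.1 i * a.2.1 i) - a.2.2)⟩

lemma one_def : (1 : Heis p n) = ((0 : Fin n → ZMod p), (0 : Fin n → ZMod p), (0 : ZMod p)) := rfl

lemma inv_def (a : Heis p n) :
    a⁻¹ = (-a.1, -a.2.1, (∑ i, a.1 i * a.2.1 i) - a.2.2) := rfl

lemma mul_def (a b : Heis p n) :
    a * b = (a.1 + b.1, a.2.1 + b.2.1, (∑ i, a.1 i * b.2.1 i) + a.2.2 + b.2.2) := rfl

instance : Group (Heis p n) :=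
  Group.ofLeftAxioms
    (fun a b c => by
      rw [mul_def (a * b), mul_def a b, mul_def a (b * c), mul_def b c]
      refine Prod.ext ?_ (Prod.ext ?_ ?_) <;>
        simp [mul_def, Finset.sum_add_distrib, add_mul, mul_add] <;> ring)
    (fun a => by
      rw [mul_def]
      refine Prod.ext ?_ (Prod.ext ?_ ?_) <;>
        simp [mul_def, one_def])
    (fun a => by
      rw [mul_def]
      refine Prod.ext ?_ (Prod.ext ?_ ?_) <;>
        simp [mul_def, one_def, inv_def, Finset.sum_add_distrib, neg_mul, mul_comm] <;> ring)

instance [NeZero p] : Fintype (Heis p n) :=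
  inferInstanceAs (Fintype ((Fin n → ZMod p) × (Fin n → ZMod p) × ZMod p))

instance : DecidableEq (Heis p n) :=
  inferInstanceAs (DecidableEq ((Fin n → ZMod p) × (Fin n → ZMod p) × ZMod p))

end Heis

lemma aux_ZZ (p : ℕ) [Fact p.Prime] (Z : Finset (ZMod p)) (h : p < 2 * Z.card) (t : ZMod p) :
    ∃ z1 ∈ Z, ∃ z2 ∈ Z, z1 + z2 = t := by
  have hinj : Function.Injective (fun z : ZMod p => t - z) := fun a b hab => by
    simpa using sub_right_injective hab
  set W := Z.image (fun z => t - z) with hW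
  have hWc : W.card = Z.card := Finset.card_image_of_injective _ hinj
  have hne : (Z ∩ W).Nonempty := by
    by_contra hcon
    rw [Finset.not_nonempty_iff_eq_empty] at hcon
    have hdisj : Disjoint Z W := Finset.disjoint_iff_inter_eq_empty.mpr hcon
    have := Finset.card_le_univ (Z ∪ W)
    rw [Finset.card_union_of_disjoint hdisj, hWc] at this
    have hcard : Fintype.card (ZMod p) = p := ZMod.card p
    omega
  obtain ⟨w, hw⟩ := hne
  rw [Finset.mem_inter] at hw
  obtain ⟨z, hz, hzw⟩ := Finset.mem_image.mp hw.2
  exact ⟨z, hz, w, hw.1, by rw [← hzw]; ring⟩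

theorem stmt12 (p n : ℕ) [Fact p.Prime]
    (X Y : Fin n → Finset (ZMod p)) (Z : Finset (ZMod p))
    (hX : ∀ i, (X i).Nonempty) (hY : ∀ i, (Y i).Nonempty) (hZ : Z.Nonempty)
    (hX0 : ∀ i, (0 : ZMod p) ∉ X i) (hY0 : ∀ i, (0 : ZMod p) ∉ Y i)
    (B : Finset (Heis p n))
    (hB : ∀ g : Heis p n, g ∈ B ↔
      ((∀ i, g.1 i ∈ X i) ∧ (∀ i, g.2.1 i ∈ Y i) ∧ g.2.2 ∈ Z))
    (hZbig : (p : ℝ) / 2 < Z.card) :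
    (∀ g : Heis p n, g ∈ B * B ↔
      ((∀ i, g.1 i ∈ X i + X i) ∧ (∀ i, g.2.1 i ∈ Y i + Y i))) ∧
    (B.card : ℝ) / p ≤
      (Set.ncard {ab : (Fin n → ZMod p) × (Fin n → ZMod p) |
        ∀ z : ZMod p, ((ab.1, ab.2, z) : Heis p n) ∈ B * B} : ℝ) := by
  have hp2 : p < 2 * Z.card := by
    have : (p : ℝ) < 2 * Z.card := by linarith
    exact_mod_cast this
  -- part 1
  have hmul : ∀ g : Heis p n, g ∈ B * B ↔
      ((∀ i, g.1 i ∈ X i + X i) ∧ (∀ i, g.2.1 i ∈ Y i + Y i)) := by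
    intro g
    constructor
    · rintro hg
      obtain ⟨a, ha, b, hb, rfl⟩ := Finset.mem_mul.mp hg
      rw [hB] at ha hb
      constructor
      · intro i
        exact Finset.mem_add.mpr ⟨a.1 i, ha.1 i, b.1 i, hb.1 i, rfl⟩
      · intro i
        exact Finset.mem_add.mpr ⟨a.2.1 i, ha.2.1 i, b.2.1 i, hb.2.1 i, rfl⟩
    · rintro ⟨h1, h2⟩
      choose xa hxa xb hxb hx using fun i => Finset.mem_add.mp (h1 i)
      choose ya hya yb hyb hy using fun i => Finset.mem_add.mp (h2 i)
      obtain ⟨z1, hz1, z2, hz2, hz⟩ :=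
        aux_ZZ p Z hp2 (g.2.2 - ∑ i, xa i * yb i)
      refine Finset.mem_mul.mpr ⟨(xa, ya, z1), ?_, (xb, yb, z2), ?_, ?_⟩
      · exact (hB _).mpr ⟨hxa, hya, hz1⟩
      · exact (hB _).mpr ⟨hxb, hyb, hz2⟩
      · refine (Heis.mul_def _ _).trans ?_
        refine Prod.ext (funext hx) (Prod.ext (funext hy) ?_)
        show (∑ i, xa i * yb i) + z1 + z2 = g.2.2
        rw [add_assoc, hz]; ring
  refine ⟨hmul, ?_⟩
  -- part 2
  set T : Finset ((Fin n → ZMod p) × (Fin n → ZMod p)) :=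
    (Fintype.piFinset fun i => X i + X i) ×ˢ (Fintype.piFinset fun i => Y i + Y i) with hT
  have hS : {ab : (Fin n → ZMod p) × (Fin n → ZMod p) |
      ∀ z : ZMod p, ((ab.1, ab.2, z) : Heis p n) ∈ B * B} = ↑T := by
    ext ab
    simp only [Set.mem_setOf_eq, Finset.coe_product, Set.mem_prod, Finset.mem_coe,
      Fintype.mem_piFinset, hT]
    constructor
    · intro h
      exact (hmul ((ab.1, ab.2, 0) : Heis p n)).mp (h 0)
    · intro h z
      exact (hmul ((ab.1, ab.2, z) : Heis p n)).mpr h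
  rw [hS, Set.ncard_coe_finset]
  have hBeq : B = ((Fintype.piFinset X) ×ˢ ((Fintype.piFinset Y) ×ˢ Z) :
      Finset ((Fin n → ZMod p) × (Fin n → ZMod p) × ZMod p)) := by
    apply Finset.ext
    rintro ⟨x, y, z⟩
    refine (hB (x, y, z)).trans ?_
    constructor
    · rintro ⟨h1, h2, h3⟩
      exact Finset.mem_product.mpr ⟨Fintype.mem_piFinset.mpr h1,
        Finset.mem_product.mpr ⟨Fintype.mem_piFinset.mpr h2, h3⟩⟩
    · intro h
      obtain ⟨h1, h23⟩ := Finset.mem_product.mp h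
      obtain ⟨h2, h3⟩ := Finset.mem_product.mp h23
      exact ⟨Fintype.mem_piFinset.mp h1, Fintype.mem_piFinset.mp h2, h3⟩
  have hBcard : B.card = (∏ i, (X i).card) * ((∏ i, (Y i).card) * Z.card) := by
    rw [hBeq]
    exact (Finset.card_product _ _).trans (by rw [Finset.card_product,
      Fintype.card_piFinset, Fintype.card_piFinset])
  have hTcard : T.card = (∏ i, (X i + X i).card) * (∏ i, (Y i + Y i).card) := by
    rw [hT, Finset.card_product, Fintype.card_piFinset, Fintype.card_piFinset]
  have hXle : (∏ i, (X i).card) ≤ ∏ i, (X i + X i).card :=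
    Finset.prod_le_prod' fun i _ => Finset.card_le_card_add_left (hX i)
  have hYle : (∏ i, (Y i).card) ≤ ∏ i, (Y i + Y i).card :=
    Finset.prod_le_prod' fun i _ => Finset.card_le_card_add_left (hY i)
  have hZle : Z.card ≤ p := by
    have := Finset.card_le_univ Z
    rwa [ZMod.card] at this
  have hnat : B.card ≤ T.card * p := by
    rw [hBcard, hTcard]
    calc (∏ i, (X i).card) * ((∏ i, (Y i).card) * Z.card)
        ≤ (∏ i, (X i + X i).card) * ((∏ i, (Y i + Y i).card) * p) :=
          Nat.mul_le_mul hXle (Nat.mul_le_mul hYle hZle)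
      _ = (∏ i, (X i + X i).card) * (∏ i, (Y i + Y i).card) * p := by ring
  have hppos : (0 : ℝ) < p := by
    exact_mod_cast (Fact.out : p.Prime).pos
  rw [div_le_iff₀ hppos]
  exact_mod_cast hnat
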